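/- For every n > 0 there exists a finitary Büchi automaton A_n over the alphabet Σ_I × Σ_O with Σ_I = Σ_O = {0,1} and with n + 2 states such that: (i) Player O wins Γ_{f_0}(L(A_n)) and an optimal winning strategy for Player O in Γ_{f_0}(L(A_n)) has cost n; and (ii) Player O wins Γ_{f_1}(L(A_n)) and an optimal winning strategy for Player O in Γ_{f_1}(L(A_n)) has cost 1. -/

import Mathlib

attribute [local instance] Classical.propDecidable

noncomputable section

/-- A parity automaton with costs `(Q, A, qI, δ, Ω, Cst)`.
`Cst q a = true` means that the transition `(q, a, δ q a)` is an increment-transition,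
`Cst q a = false` means it is an `ε`-transition. -/
structure PACost (Q : Type) (A : Type) where
  qI : Q
  δ : Q → A → Q
  Ω : Q → ℕ
  Cst : Q → A → Bool

namespace PACost

variable {Q A : Type}

/-- The state reached after processing the first `n` letters of `w` starting in `q0`. -/
def stateAt (M : PACost Q A) (q0 : Q) (w : ℕ → A) : ℕ → Q
  | 0 => q0
  | n + 1 => M.δ (stateAt M q0 w n) (w n)

/-- The cost (number of increment-transitions) of the run infix between positions `m` and `n`. -/
def segCost (M : PACost Q A) (q0 : Q) (w : ℕ → A) (m n : ℕ) : ℕ :=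
  ((Finset.Ico m n).filter fun j => M.Cst (stateAt M q0 w j) (w j) = true).card

/-- `Ans c`: the set of even colors of `M` that are larger than `c`. -/
def Ans (M : PACost Q A) (c : ℕ) : Set ℕ :=
  { c' | (∃ q, M.Ω q = c') ∧ c < c' ∧ Even c' }

/-- The cost-of-response at position `n` of the run of `M` on `w` starting in `q0`. -/
def Cor (M : PACost Q A) (q0 : Q) (w : ℕ → A) (n : ℕ) : ℕ∞ :=
  if Even (M.Ω (stateAt M q0 w n)) then 0
  else
    sInf { c : ℕ∞ | ∃ n', n < n' ∧
      M.Ω (stateAt M q0 w n') ∈ M.Ans (M.Ω (stateAt M q0 w n)) ∧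
      c = (segCost M q0 w n n' : ℕ∞) }

/-- The run of `M` on `w` starting in `q0` satisfies the parity condition with costs. -/
def Accepting (M : PACost Q A) (q0 : Q) (w : ℕ → A) : Prop :=
  Filter.limsup (fun n => Cor M q0 w n) Filter.atTop < ⊤

/-- The language of `M`. -/
def Lang (M : PACost Q A) : Set (ℕ → A) := { w | Accepting M M.qI w }

/-- `M` is a finitary Büchi automaton: every transition is an increment-transition and
all colors are `1` or `2`. -/
def FinBuchi (M : PACost Q A) : Prop :=
  (∀ q a, M.Cst q a = true) ∧ ∀ q, M.Ω q = 1 ∨ M.Ω q = 2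

end PACost

/-- The finite segment `w m, w (m+1), …, w (n-1)` of an infinite word `w`. -/
def seg {A : Type} (w : ℕ → A) (m n : ℕ) : List A :=
  (List.range (n - m)).map fun i => w (m + i)

section DelayGames

variable {I O : Type}

/-- The `n`-th letter of the concatenation `u 0 ++ u 1 ++ u 2 ++ ⋯`
(well-defined whenever all blocks are non-empty). -/
def flatWord [Inhabited I] (u : ℕ → List I) (n : ℕ) : I :=
  (((List.range (n + 1)).map u).flatten).getD n default

/-- A delay function maps every round to a positive number of letters. -/
def DelayFn (f : ℕ → ℕ) : Prop := ∀ i, 0 < f i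

/-- The constant delay function `f_k` with `f_k 0 = k + 1` and `f_k i = 1` for `i > 0`. -/
def constDF (k : ℕ) : ℕ → ℕ := fun i => if i = 0 then k + 1 else 1

/-- The sequence of letters Player I has produced up to (and including) round `i`. -/
def oHist (u : ℕ → List I) (i : ℕ) : List I := ((List.range (i + 1)).map u).flatten

/-- `τO` is a winning strategy for Player O in the delay game with delay function `f`
and winning condition `L`. -/
def OWinning [Inhabited I] (f : ℕ → ℕ) (L : Set (ℕ → I × O)) (τO : List I → O) : Prop :=
  ∀ u : ℕ → List I, ∀ v : ℕ → O,
    (∀ i, (u i).length = f i) →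
    (∀ i, v i = τO (oHist u i)) →
    (fun n => (flatWord u n, v n)) ∈ L

/-- Player O wins the delay game `Γ_f(L)`. -/
def OWins [Inhabited I] (f : ℕ → ℕ) (L : Set (ℕ → I × O)) : Prop :=
  ∃ τO : List I → O, OWinning f L τO

/-- `τI` is a winning strategy for Player I in the delay game with delay function `f`
and winning condition `L`. -/
def IWinning [Inhabited I] (f : ℕ → ℕ) (L : Set (ℕ → I × O)) (τI : List O → List I) : Prop :=
  (∀ w, (τI w).length = f w.length) ∧
  ∀ u : ℕ → List I, ∀ v : ℕ → O,
    (∀ i, u i = τI ((List.range i).map v)) →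
    (fun n => (flatWord u n, v n)) ∉ L

/-- Player I wins the delay game `Γ_f(L)`. -/
def IWins [Inhabited I] (f : ℕ → ℕ) (L : Set (ℕ → I × O)) : Prop :=
  ∃ τI : List O → List I, IWinning f L τI

/-- The cost of a strategy `τO` of Player O: the supremum of the word-costs `wc` of the
outcomes of plays consistent with `τO`. -/
def stratCost [Inhabited I] (wc : (ℕ → I × O) → ℕ∞) (f : ℕ → ℕ) (τO : List I → O) : ℕ∞ :=
  ⨆ (u : ℕ → List I) (v : ℕ → O)
    (_ : (∀ i, (u i).length = f i) ∧ ∀ i, v i = τO (oHist u i)),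
    wc (fun n => (flatWord u n, v n))

/-- An optimal winning strategy for Player O in `Γ_f(L)` exists and has cost `c`. -/
def OptimalCostIs [Inhabited I] (L : Set (ℕ → I × O)) (wc : (ℕ → I × O) → ℕ∞)
    (f : ℕ → ℕ) (c : ℕ∞) : Prop :=
  (∃ τO, OWinning f L τO ∧ stratCost wc f τO = c) ∧
  ∀ τO, OWinning f L τO → c ≤ stratCost wc f τO

end DelayGames

/-- The cost `limsup_n Cor(ρ(w), n)` of the run of `M` on an infinite word `w`. -/
def PACost.wCost {Q I O : Type} (M : PACost Q (I × O)) : (ℕ → I × O) → ℕ∞ :=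
  fun w => Filter.limsup (fun n => PACost.Cor M M.qI w n) Filter.atTop

/-! ### Auxiliary construction for Statement 12 -/

/-- wrong-prediction successor: start of the punishment chain. -/
def wrongNext (k : ℕ) : Fin (k + 3) :=
  if h : 0 < k then ⟨3, by omega⟩ else ⟨0, by omega⟩

/-- The automaton: state 0 is the accepting state, states 1/2 remember the last
prediction of Player O, states 3..k+2 form the punishment chain. -/
def Aut (k : ℕ) : PACost (Fin (k + 3)) (Bool × Bool) where
  qI := ⟨0, by omega⟩
  δ q l :=
    if q.val = 0 then (if l.2 then ⟨2, by omega⟩ else ⟨1, by omega⟩)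
    else if q.val = 1 then (if l.1 = false then ⟨0, by omega⟩ else wrongNext k)
    else if q.val = 2 then (if l.1 = true then ⟨0, by omega⟩ else wrongNext k)
    else if h : q.val = k + 2 then ⟨0, by omega⟩
    else ⟨q.val + 1, by have := q.isLt; omega⟩
  Ω q := if q.val = 0 then 2 else 1
  Cst _ _ := true

namespace St12

/-- value of the state at position m -/
def S (k : ℕ) (w : ℕ → Bool × Bool) (m : ℕ) : ℕ :=
  ((Aut k).stateAt (Aut k).qI w m).val

variable {k : ℕ} {w : ℕ → Bool × Bool}

lemma S_zero : S k w 0 = 0 := rfl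

lemma S_lt (m : ℕ) : S k w m < k + 3 := ((Aut k).stateAt (Aut k).qI w m).isLt

lemma delta_val (q : Fin (k+3)) (l : Bool × Bool) :
    ((Aut k).δ q l).val =
      if q.val = 0 then (if l.2 then 2 else 1)
      else if q.val = 1 then (if l.1 = false then 0 else (wrongNext k).val)
      else if q.val = 2 then (if l.1 = true then 0 else (wrongNext k).val)
      else if q.val = k + 2 then 0
      else q.val + 1 := by
  simp only [Aut]
  split_ifs <;> rfl

lemma S_succ (m : ℕ) :
    S k w (m+1) =
      if S k w m = 0 then (if (w m).2 then 2 else 1)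
      else if S k w m = 1 then (if (w m).1 = false then 0 else (wrongNext k).val)
      else if S k w m = 2 then (if (w m).1 = true then 0 else (wrongNext k).val)
      else if S k w m = k + 2 then 0
      else S k w m + 1 := by
  have : S k w (m+1) = ((Aut k).δ ((Aut k).stateAt (Aut k).qI w m) (w m)).val := rfl
  rw [this, delta_val]
  rfl

lemma wrongNext_val : (wrongNext k).val = if 0 < k then 3 else 0 := by
  unfold wrongNext; split_ifs <;> rfl

lemma S_succ_of_zero {m : ℕ} (h : S k w m = 0) :
    S k w (m+1) = if (w m).2 then 2 else 1 := by
  rw [S_succ, if_pos h]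

lemma S_succ_correct {m : ℕ} {p : Bool} (h : S k w m = (if p then 2 else 1))
    (ha : (w m).1 = p) : S k w (m+1) = 0 := by
  rw [S_succ]; cases p <;> simp_all

lemma S_succ_wrong {m : ℕ} {p : Bool} (h : S k w m = (if p then 2 else 1))
    (ha : (w m).1 = !p) : S k w (m+1) = (wrongNext k).val := by
  rw [S_succ]; cases p <;> simp_all

lemma S_succ_chain {m : ℕ} (h3 : 3 ≤ S k w m) (hk : S k w m ≤ k + 1) :
    S k w (m+1) = S k w m + 1 := by
  rw [S_succ, if_neg (by omega), if_neg (by omega), if_neg (by omega), if_neg (by omega)]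

lemma S_succ_last {m : ℕ} (hk : 0 < k) (h : S k w m = k + 2) :
    S k w (m+1) = 0 := by
  rw [S_succ, if_neg (by omega), if_neg (by omega), if_neg (by omega), if_pos h]

/-- measure: steps needed to reach state 0 -/
def μ (k : ℕ) (q : ℕ) : ℕ := if q = 0 then 0 else if q ≤ 2 then k + 1 else k + 3 - q

lemma mu_le (q : ℕ) (hq : q < k + 3) (h0 : q ≠ 0) : μ k q ≤ k + 1 := by
  unfold μ; split_ifs <;> omega

lemma step_progress (m : ℕ) (h0 : S k w m ≠ 0) :
    S k w (m+1) = 0 ∨ (S k w (m+1) ≠ 0 ∧ μ k (S k w (m+1)) < μ k (S k w m)) := by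
  have hlt := S_lt (k := k) (w := w) m
  have hwn := wrongNext_val (k := k)
  rw [S_succ, if_neg h0]
  by_cases h1 : S k w m = 1
  · rw [if_pos h1]
    split_ifs with hb
    · left; rfl
    · rcases Nat.eq_zero_or_pos k with hk | hk
      · left; rw [hwn, if_neg (by omega)]
      · right; rw [hwn, if_pos hk, h1]
        refine ⟨by omega, ?_⟩
        simp only [μ]; norm_num
  · rw [if_neg h1]
    by_cases h2 : S k w m = 2
    · rw [if_pos h2]
      split_ifs with hb
      · left; rfl
      · rcases Nat.eq_zero_or_pos k with hk | hk
        · left; rw [hwn, if_neg (by omega)]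
        · right; rw [hwn, if_pos hk, h2]
          refine ⟨by omega, ?_⟩
          simp only [μ]; norm_num
    · by_cases h3 : S k w m = k + 2
      · rw [if_neg h2, if_pos h3]; left; rfl
      · rw [if_neg h2, if_neg h3]
        right
        refine ⟨by omega, ?_⟩
        simp only [μ]
        split_ifs <;> omega

lemma reach_aux (j : ℕ) : ∀ m, S k w m ≠ 0 → μ k (S k w m) ≤ j →
    ∃ i, 0 < i ∧ i ≤ j ∧ S k w (m + i) = 0 := by
  induction j with
  | zero =>
    intro m h0 hμ
    exfalso
    have hlt := S_lt (k := k) (w := w) m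
    unfold μ at hμ
    split_ifs at hμ <;> omega
  | succ j ih =>
    intro m h0 hμ
    rcases step_progress (k := k) (w := w) m h0 with h | ⟨h1, h2⟩
    · exact ⟨1, by omega, by omega, h⟩
    · obtain ⟨i, hi1, hi2, hi3⟩ := ih (m+1) h1 (by omega)
      exact ⟨i + 1, by omega, by omega, by rw [show m + (i+1) = m + 1 + i by omega]; exact hi3⟩

/-- from any nonzero state, we return to 0 within k+1 steps -/
lemma reach_of_nonzero {m : ℕ} (h0 : S k w m ≠ 0) :
    ∃ i, 0 < i ∧ i ≤ k + 1 ∧ S k w (m + i) = 0 :=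
  reach_aux (k + 1) m h0 (mu_le _ (S_lt m) h0)

/-- infinitely many nonzero positions -/
lemma nonzero_infinite (N : ℕ) : ∃ m, N ≤ m ∧ S k w m ≠ 0 := by
  by_cases h : S k w N = 0
  · refine ⟨N + 1, by omega, ?_⟩
    rw [S_succ_of_zero h]; split_ifs <;> omega
  · exact ⟨N, le_refl _, h⟩

/-! ### Cost-of-response computations -/

lemma omega_eq (q : Fin (k+3)) : (Aut k).Ω q = if q.val = 0 then 2 else 1 := rfl

lemma segCost_eq (m n' : ℕ) : (Aut k).segCost (Aut k).qI w m n' = n' - m := by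
  unfold PACost.segCost
  have : (Finset.filter (fun j => (Aut k).Cst ((Aut k).stateAt (Aut k).qI w j) (w j) = true)
      (Finset.Ico m n')) = Finset.Ico m n' :=
    Finset.filter_true_of_mem (fun x _ => rfl)
  rw [this, Nat.card_Ico]

lemma cor_zero {m : ℕ} (h : S k w m = 0) : (Aut k).Cor (Aut k).qI w m = 0 := by
  have h' : ((Aut k).stateAt (Aut k).qI w m).val = 0 := h
  unfold PACost.Cor
  rw [omega_eq, if_pos h', if_pos (by norm_num : Even 2)]

lemma cor_nonzero {m : ℕ} (h : S k w m ≠ 0) :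
    (Aut k).Cor (Aut k).qI w m =
      sInf {c : ℕ∞ | ∃ n', m < n' ∧ S k w n' = 0 ∧ c = ((n' - m : ℕ) : ℕ∞)} := by
  have h' : ((Aut k).stateAt (Aut k).qI w m).val ≠ 0 := h
  unfold PACost.Cor
  rw [omega_eq, if_neg h', if_neg (by norm_num : ¬ Even 1)]
  congr 1
  ext c
  simp only [Set.mem_setOf_eq]
  constructor
  · rintro ⟨n', hn', hans, hc⟩
    refine ⟨n', hn', ?_, by rw [hc, segCost_eq]⟩
    simp only [PACost.Ans, Set.mem_setOf_eq] at hans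
    obtain ⟨_, hgt, heven⟩ := hans
    by_contra hz
    have hz' : ¬ ((Aut k).stateAt (Aut k).qI w n').val = 0 := hz
    have hone : (Aut k).Ω ((Aut k).stateAt (Aut k).qI w n') = 1 := by rw [omega_eq, if_neg hz']
    rw [hone] at hgt; omega
  · rintro ⟨n', hn', hz, hc⟩
    refine ⟨n', hn', ?_, by rw [segCost_eq]; exact hc⟩
    have hz' : ((Aut k).stateAt (Aut k).qI w n').val = 0 := hz
    have htwo : (Aut k).Ω ((Aut k).stateAt (Aut k).qI w n') = 2 := by rw [omega_eq, if_pos hz']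
    rw [htwo]
    simp only [PACost.Ans, Set.mem_setOf_eq]
    exact ⟨⟨(Aut k).qI, rfl⟩, by omega, by norm_num⟩

lemma cor_le_of {m j : ℕ} (h : S k w m ≠ 0) (hj : 0 < j) (h0 : S k w (m+j) = 0) :
    (Aut k).Cor (Aut k).qI w m ≤ (j : ℕ∞) := by
  rw [cor_nonzero h]
  exact sInf_le ⟨m+j, by omega, h0, by simp⟩

lemma cor_ge_one {m : ℕ} (h : S k w m ≠ 0) : 1 ≤ (Aut k).Cor (Aut k).qI w m := by
  rw [cor_nonzero h]
  apply le_sInf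
  rintro c ⟨n', hn', -, rfl⟩
  exact_mod_cast Nat.one_le_iff_ne_zero.mpr (by omega)

lemma cor_eq {m d : ℕ} (h : S k w m ≠ 0) (hd : 0 < d)
    (hmid : ∀ j, 0 < j → j < d → S k w (m+j) ≠ 0) (hend : S k w (m+d) = 0) :
    (Aut k).Cor (Aut k).qI w m = (d : ℕ∞) := by
  refine le_antisymm (cor_le_of h hd hend) ?_
  rw [cor_nonzero h]
  apply le_sInf
  rintro c ⟨n', hn', hz, rfl⟩
  have hge : m + d ≤ n' := by
    by_contra hlt
    push_neg at hlt
    apply hmid (n' - m) (by omega) (by omega)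
    rw [show m + (n' - m) = n' by omega]
    exact hz
  exact_mod_cast (by omega : d ≤ n' - m)

/-! ### limsup helpers -/

lemma limsup_le_of_all {f : ℕ → ℕ∞} {c : ℕ∞} (h : ∀ m, f m ≤ c) :
    Filter.limsup f Filter.atTop ≤ c := by
  rw [Filter.limsup_eq]
  exact sInf_le (Filter.Eventually.of_forall h)

lemma le_limsup_of_freq {f : ℕ → ℕ∞} {c : ℕ∞} (h : ∀ N, ∃ m, N ≤ m ∧ c ≤ f m) :
    c ≤ Filter.limsup f Filter.atTop := by
  rw [Filter.limsup_eq]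
  apply le_sInf
  intro a ha
  simp only [Set.mem_setOf_eq, Filter.eventually_atTop] at ha
  obtain ⟨N, hN⟩ := ha
  obtain ⟨m, hm, hcm⟩ := h N
  exact le_trans hcm (hN m hm)

/-! ### word costs -/

lemma wcost_le : (Aut k).wCost w ≤ ((k+1 : ℕ) : ℕ∞) := by
  apply limsup_le_of_all
  intro m
  by_cases hz : S k w m = 0
  · rw [cor_zero hz]; exact zero_le
  · obtain ⟨i, hi0, hik, hiz⟩ := reach_of_nonzero hz
    exact le_trans (cor_le_of hz hi0 hiz) (by exact_mod_cast hik)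

lemma wcost_ge_one : 1 ≤ (Aut k).wCost w := by
  apply le_limsup_of_freq
  intro N
  obtain ⟨m, hm, h0⟩ := nonzero_infinite (k := k) (w := w) N
  exact ⟨m, hm, cor_ge_one h0⟩

lemma lang_univ : w ∈ (Aut k).Lang := by
  show PACost.Accepting _ _ _
  unfold PACost.Accepting
  exact lt_of_le_of_lt (wcost_le (k := k) (w := w)) (ENat.coe_lt_top _)

end St12
namespace St12

variable {k : ℕ} {w : ℕ → Bool × Bool}

/-! ### oHist and flatWord -/

lemma oHist_succ {I : Type} (u : ℕ → List I) (i : ℕ) :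
    oHist u (i+1) = oHist u i ++ u (i+1) := by
  unfold oHist; rw [List.range_succ]; simp

lemma oHist_prefix {I : Type} (u : ℕ → List I) {i j : ℕ} (h : i ≤ j) :
    oHist u i <+: oHist u j := by
  induction j with
  | zero => have : i = 0 := by omega
            subst this; exact List.prefix_refl _
  | succ j ih =>
    rcases Nat.lt_or_ge i (j+1) with h' | h'
    · exact List.IsPrefix.trans (ih (by omega)) (by rw [oHist_succ]; exact List.prefix_append _ _)
    · have : i = j + 1 := by omega
      subst this; exact List.prefix_refl _

lemma length_oHist {I : Type} (u : ℕ → List I) {kk : ℕ}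
    (hu : ∀ i, (u i).length = constDF kk i) (i : ℕ) :
    (oHist u i).length = kk + 1 + i := by
  induction i with
  | zero => simpa [oHist, constDF] using hu 0
  | succ i ih =>
    rw [oHist_succ, List.length_append, ih, hu]
    simp [constDF]
    omega

lemma flatWord_eq_getD {I : Type} [Inhabited I] (u : ℕ → List I) (n : ℕ) :
    flatWord u n = (oHist u n).getD n default := rfl

lemma flatWord_getD_oHist {I : Type} [Inhabited I] (u : ℕ → List I) {kk : ℕ}
    (hu : ∀ i, (u i).length = constDF kk i) {n i : ℕ} (hni : n < kk + 1 + i) :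
    flatWord u n = (oHist u i).getD n default := by
  rcases le_or_gt i n with h | h
  · obtain ⟨t, ht⟩ := oHist_prefix u h
    rw [flatWord_eq_getD, ← ht, List.getD_append]
    rw [length_oHist u hu]; omega
  · obtain ⟨t, ht⟩ := oHist_prefix u (le_of_lt h)
    rw [flatWord_eq_getD, ← ht, List.getD_append]
    rw [length_oHist u hu]; omega

/-! ### stratCost generalities -/

lemma stratCost_ge {I O : Type} [Inhabited I] (wc : (ℕ → I × O) → ℕ∞) (f : ℕ → ℕ)
    (τO : List I → O) (u : ℕ → List I) (v : ℕ → O)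
    (h1 : ∀ i, (u i).length = f i) (h2 : ∀ i, v i = τO (oHist u i)) :
    wc (fun n => (flatWord u n, v n)) ≤ stratCost wc f τO := by
  apply le_iSup_of_le u
  apply le_iSup_of_le v
  exact le_iSup_of_le ⟨h1, h2⟩ le_rfl

lemma stratCost_le {I O : Type} [Inhabited I] {wc : (ℕ → I × O) → ℕ∞} {f : ℕ → ℕ}
    {τO : List I → O} {c : ℕ∞}
    (h : ∀ (u : ℕ → List I) (v : ℕ → O), (∀ i, (u i).length = f i) →
      (∀ i, v i = τO (oHist u i)) → wc (fun n => (flatWord u n, v n)) ≤ c) :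
    stratCost wc f τO ≤ c := by
  apply iSup_le; intro u
  apply iSup_le; intro v
  apply iSup_le; rintro ⟨h1, h2⟩
  exact h u v h1 h2

/-- the default play of Player I for `constDF kk` -/
def defPlay (kk : ℕ) : ℕ → List Bool := fun i =>
  if i = 0 then List.replicate (kk+1) default else [default]

lemma defPlay_len (kk : ℕ) : ∀ i, (defPlay kk i).length = constDF kk i := by
  intro i; unfold defPlay constDF; split_ifs <;> simp

/-! ### every strategy wins, since the language is everything -/

lemma all_winning (f : ℕ → ℕ) (τO : List Bool → Bool) :
    OWinning f ((Aut k).Lang) τO :=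
  fun _ _ _ _ => lang_univ

/-! ### the lookahead-1 strategy -/

/-- with one step of lookahead, Player O simply outputs the last letter of the history,
i.e. predicts the next input letter correctly -/
def τ1 : List Bool → Bool := fun h => h.getD (h.length - 1) default

lemma tau1_pred (u : ℕ → List Bool) (v : ℕ → Bool)
    (h1 : ∀ i, (u i).length = constDF 1 i) (h2 : ∀ i, v i = τ1 (oHist u i)) (i : ℕ) :
    v i = flatWord u (i+1) := by
  rw [h2 i]
  unfold τ1
  rw [length_oHist u h1]
  rw [flatWord_getD_oHist u h1 (by omega : i + 1 < 1 + 1 + i)]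
  congr 1
  omega

lemma f1_S_even (u : ℕ → List Bool) (v : ℕ → Bool)
    (hv : ∀ i, v i = flatWord u (i+1)) :
    ∀ t, S k (fun n => (flatWord u n, v n)) (2*t) = 0 := by
  set w' : ℕ → Bool × Bool := fun n => (flatWord u n, v n) with hw'
  intro t
  induction t with
  | zero => exact S_zero
  | succ t ih =>
    have hs : S k w' (2*t+1) = if (w' (2*t)).2 then 2 else 1 := S_succ_of_zero ih
    have ha : (w' (2*t+1)).1 = (w' (2*t)).2 := by
      show flatWord u (2*t+1) = v (2*t)
      rw [hv (2*t)]
    have : S k w' (2*t+1+1) = 0 := S_succ_correct hs ha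
    rw [show 2*(t+1) = 2*t+1+1 by ring]
    exact this

lemma f1_wcost (u : ℕ → List Bool) (v : ℕ → Bool)
    (hv : ∀ i, v i = flatWord u (i+1)) :
    (Aut k).wCost (fun n => (flatWord u n, v n)) ≤ 1 := by
  apply limsup_le_of_all
  intro m
  rcases Nat.even_or_odd m with ⟨t, ht⟩ | ⟨t, ht⟩
  · rw [show m = 2*t by omega]
    rw [cor_zero (f1_S_even u v hv t)]
    exact zero_le
  · rw [show m = 2*t+1 by omega]
    have h0 : S k (fun n => (flatWord u n, v n)) (2*t) = 0 := f1_S_even u v hv t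
    have hs := S_succ_of_zero h0
    have hne : S k (fun n => (flatWord u n, v n)) (2*t+1) ≠ 0 := by
      rw [hs]; split_ifs <;> omega
    have hnext : S k (fun n => (flatWord u n, v n)) (2*t+1+1) = 0 := by
      rw [show 2*t+1+1 = 2*(t+1) by ring]
      exact f1_S_even u v hv (t+1)
    exact_mod_cast cor_le_of hne (by omega : 0 < 1) hnext

/-! ### the adversarial input of Player I (no lookahead): always falsify the prediction -/

section Adv

variable (τO : List Bool → Bool)

/-- the adversarial input, as finite prefixes -/
def pref : ℕ → List Bool
  | 0 => []
  | j+1 => pref j ++ [if j = 0 then default else !(τO (pref j))]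

def advA (j : ℕ) : Bool := (pref τO (j+1)).getD j default

def advU (j : ℕ) : List Bool := [advA τO j]

def advV (j : ℕ) : Bool := τO (oHist (advU τO) j)

lemma pref_len : ∀ j, (pref τO j).length = j := by
  intro j
  induction j with
  | zero => rfl
  | succ j ih => rw [pref, List.length_append, ih]; rfl

lemma map_singleton_flatten (L : List ℕ) (g : ℕ → Bool) :
    (L.map (fun j => [g j])).flatten = L.map g := by
  induction L with
  | nil => rfl
  | cons x xs ih => simp [ih]

lemma range_map_advA : ∀ j, (List.range j).map (advA τO) = pref τO j := by
  intro j
  induction j with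
  | zero => rfl
  | succ j ih =>
    rw [List.range_succ, List.map_append, ih, pref]
    congr 1
    show [advA τO j] = _
    congr 1
    unfold advA
    rw [pref, List.getD_append_right _ _ _ _ (le_of_eq (pref_len τO j))]
    rw [pref_len τO j]
    simp

lemma oHist_adv (i : ℕ) : oHist (advU τO) i = pref τO (i+1) := by
  unfold oHist advU
  rw [map_singleton_flatten, range_map_advA]

lemma advU_len : ∀ i, (advU τO i).length = constDF 0 i := by
  intro i; unfold advU constDF; split_ifs <;> rfl

lemma flatWord_adv (m : ℕ) : flatWord (advU τO) m = advA τO m := by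
  rw [flatWord_eq_getD, oHist_adv]
  rfl

lemma falsify (i : ℕ) : advA τO (i+1) = !(advV τO i) := by
  unfold advA advV
  rw [oHist_adv]
  show (pref τO (i+1+1)).getD (i+1) default = _
  rw [pref, List.getD_append_right _ _ _ _ (le_of_eq (pref_len τO (i+1)))]
  rw [pref_len τO (i+1)]
  simp

end Adv

/-! ### the punishment run -/

lemma wrong_run {m : ℕ} (h0 : S k w m = 0) (hw : (w (m+1)).1 = !((w m).2)) :
    S k w (m + (k+2)) = 0 ∧ ∀ j, 1 ≤ j → j ≤ k + 1 → S k w (m+j) ≠ 0 := by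
  have h1 : S k w (m+1) = if (w m).2 then 2 else 1 := S_succ_of_zero h0
  have h2 : S k w (m+1+1) = (wrongNext k).val := S_succ_wrong h1 hw
  have h1ne : ∀ j, j = 1 → S k w (m+j) ≠ 0 := by
    intro j hj; subst hj; rw [h1]; split_ifs <;> omega
  rcases Nat.eq_zero_or_pos k with hk | hk
  · subst hk
    constructor
    · rw [show m + (0+2) = m+1+1 by ring, h2, wrongNext_val]
      simp
    · intro j hj1 hj2
      exact h1ne j (by omega)
  · have chain : ∀ t, t ≤ k - 1 → S k w (m+2+t) = 3 + t := by
      intro t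
      induction t with
      | zero =>
        intro _
        rw [show m+2+0 = m+1+1 by ring, h2, wrongNext_val, if_pos hk]
      | succ t ih =>
        intro ht
        have iht := ih (by omega)
        rw [show m+2+(t+1) = (m+2+t)+1 by ring,
          S_succ_chain (by omega) (by omega), iht]
        omega
    constructor
    · have hlast : S k w (m+2+(k-1)) = k + 2 := by rw [chain (k-1) le_rfl]; omega
      have := S_succ_last hk hlast
      rw [show m+2+(k-1)+1 = m+(k+2) by omega] at this
      exact this
    · intro j hj1 hj2
      rcases Nat.lt_or_ge j 2 with h | h
      · exact h1ne j (by omega)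
      · have := chain (j-2) (by omega)
        rw [show m+2+(j-2) = m+j by omega] at this
        omega

lemma adv_falsify_w (τO : List Bool → Bool) (m : ℕ) :
    ((fun n => (flatWord (advU τO) n, advV τO n)) (m+1)).1
      = !(((fun n => (flatWord (advU τO) n, advV τO n)) m).2) := by
  show flatWord (advU τO) (m+1) = !(advV τO m)
  rw [flatWord_adv, falsify]

lemma adv_zero (τO : List Bool → Bool) :
    ∀ t, S k (fun n => (flatWord (advU τO) n, advV τO n)) (t*(k+2)) = 0 := by
  intro t
  induction t with
  | zero => simp only [Nat.zero_mul]; exact S_zero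
  | succ t ih =>
    have := (wrong_run ih (adv_falsify_w τO (t*(k+2)))).1
    rw [show t*(k+2) + (k+2) = (t+1)*(k+2) by ring] at this
    exact this

lemma adv_wcost (τO : List Bool → Bool) :
    ((k+1 : ℕ) : ℕ∞) ≤ (Aut k).wCost (fun n => (flatWord (advU τO) n, advV τO n)) := by
  apply le_limsup_of_freq
  intro N
  refine ⟨N*(k+2)+1, by nlinarith, ?_⟩
  set m := N*(k+2) with hm
  obtain ⟨hend, hmid⟩ := wrong_run (adv_zero τO N) (adv_falsify_w τO m)
  have : (Aut k).Cor (Aut k).qI (fun n => (flatWord (advU τO) n, advV τO n)) (m+1)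
      = ((k+1 : ℕ) : ℕ∞) := by
    apply cor_eq (hmid 1 le_rfl (by omega)) (by omega)
    · intro j hj1 hj2
      rw [show m+1+j = m+(j+1) by ring]
      exact hmid (j+1) (by omega) (by omega)
    · rw [show m+1+(k+1) = m+(k+2) by ring]
      exact hend
  rw [this]

lemma wcost_le_strat (f : ℕ → ℕ) (τO : List Bool → Bool) :
    stratCost (Aut k).wCost f τO ≤ ((k+1 : ℕ) : ℕ∞) :=
  stratCost_le (fun _ _ _ _ => wcost_le)

lemma strat_ge_f0 (τO : List Bool → Bool) :
    ((k+1 : ℕ) : ℕ∞) ≤ stratCost (Aut k).wCost (constDF 0) τO :=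
  le_trans (adv_wcost τO)
    (stratCost_ge _ _ τO (advU τO) (advV τO) (advU_len τO) (fun _ => rfl))

end St12
/-- Theorem 6, trading one move of lookahead for cost. For every `n > 0`
there is a finitary Büchi automaton over `{0,1}²` with `n + 2` states such that the optimal
winning strategy of Player O in the delay-free game has cost `n`, while with lookahead `1`
it has cost `1`. -/
theorem statement12 (n : ℕ) (hn : 0 < n) :
    ∃ M : PACost (Fin (n + 2)) (Bool × Bool),
      M.FinBuchi ∧
      (OWins (constDF 0) M.Lang ∧ OptimalCostIs M.Lang M.wCost (constDF 0) (n : ℕ∞)) ∧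
      (OWins (constDF 1) M.Lang ∧ OptimalCostIs M.Lang M.wCost (constDF 1) 1) := by
  obtain ⟨k, rfl⟩ : ∃ k, n = k + 1 := ⟨n - 1, by omega⟩
  refine ⟨Aut k, ⟨fun q a => rfl, fun q => ?_⟩, ⟨⟨fun _ => default, St12.all_winning _ _⟩, ?_, ?_⟩,
    ⟨St12.τ1, St12.all_winning _ _⟩, ?_, ?_⟩
  · rw [St12.omega_eq]; split_ifs <;> omega
  · exact ⟨fun _ => default, St12.all_winning _ _,
      le_antisymm (St12.wcost_le_strat _ _) (St12.strat_ge_f0 _)⟩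
  · intro τO _
    exact St12.strat_ge_f0 τO
  · refine ⟨St12.τ1, St12.all_winning _ _, le_antisymm ?_ ?_⟩
    · exact St12.stratCost_le
        (fun u v h1 h2 => St12.f1_wcost u v (fun i => St12.tau1_pred u v h1 h2 i))
    · exact le_trans St12.wcost_ge_one
        (St12.stratCost_ge _ _ _ (St12.defPlay 1)
          (fun i => St12.τ1 (oHist (St12.defPlay 1) i)) (St12.defPlay_len 1) (fun _ => rfl))
  · intro τO _
    exact le_trans St12.wcost_ge_one
      (St12.stratCost_ge _ _ τO (St12.defPlay 1)
        (fun i => τO (oHist (St12.defPlay 1) i)) (St12.defPlay_len 1) (fun _ => rfl))
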